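/- Let u be a continuous real-valued function on the closed unit disc Δ̄ ⊆ ℂ, let ũ be the solution of the Dirichlet problem on Δ with boundary values u|_{∂Δ}, and let C ≥ max(sup_{Δ̄}|u|) be a constant. Then the compact set K = {(z, w) ∈ Δ̄ × ℂ : ũ(z) ≤ Re w ≤ 3C, |Im w| ≤ C} is polynomially convex in ℂ². -/

import Mathlib

open Metric Set
noncomputable section

def HarmonicOnSet (h : ℂ → ℝ) (U : Set ℂ) : Prop :=
  ∀ z ∈ U, ∃ r > 0, ball z r ⊆ U ∧ ∃ g : ℂ → ℂ,
    DifferentiableOn ℂ g (ball z r) ∧ ∀ w ∈ ball z r, h w = (g w).re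

def SubharmonicOnSet (φ : ℂ → EReal) (U : Set ℂ) : Prop :=
  UpperSemicontinuousOn φ U ∧
  ∀ (z : ℂ) (r : ℝ), 0 < r → closedBall z r ⊆ U →
    ∀ h : ℂ → ℝ, ContinuousOn h (closedBall z r) → HarmonicOnSet h (ball z r) →
      (∀ w ∈ sphere z r, φ w ≤ (h w : EReal)) → ∀ w ∈ ball z r, φ w ≤ (h w : EReal)

def PlurisubharmonicOn {n : ℕ} (φ : (Fin n → ℂ) → EReal) (U : Set (Fin n → ℂ)) : Prop :=
  UpperSemicontinuousOn φ U ∧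
  ∀ a b : Fin n → ℂ, SubharmonicOnSet (fun t => φ (a + t • b)) {t : ℂ | a + t • b ∈ U}

def Pluripolar {n : ℕ} (E : Set (Fin n → ℂ)) : Prop :=
  ∃ U : Set (Fin n → ℂ), IsOpen U ∧ E ⊆ U ∧
    ∃ φ : (Fin n → ℂ) → EReal, PlurisubharmonicOn φ U ∧
      (∀ z ∈ U, ∃ w ∈ connectedComponentIn U z, φ w ≠ ⊥) ∧
      E ⊆ {z | φ z = ⊥}

def PolarSet (E : Set ℂ) : Prop :=
  ∃ U : Set ℂ, IsOpen U ∧ E ⊆ U ∧ ∃ φ : ℂ → EReal,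
    SubharmonicOnSet φ U ∧ (∃ z ∈ U, φ z ≠ ⊥) ∧ E ⊆ {z | φ z = ⊥}

def polyHull {n : ℕ} (K : Set (Fin n → ℂ)) : Set (Fin n → ℂ) :=
  {z | ∀ P : MvPolynomial (Fin n) ℂ,
    ‖MvPolynomial.eval z P‖ ≤ ⨆ w ∈ K, ‖MvPolynomial.eval w P‖}


section AuxLemmas
open Complex intervalIntegral MeasureTheory

-- L1: two holomorphic functions with the same real part on an open preconnected set
-- have equal derivatives there.
lemma deriv_eq_of_re_eq {U : Set ℂ} (hUo : IsOpen U) (hUc : IsPreconnected U)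
    {g₁ g₂ : ℂ → ℂ} (h₁ : DifferentiableOn ℂ g₁ U) (h₂ : DifferentiableOn ℂ g₂ U)
    (hre : ∀ z ∈ U, (g₁ z).re = (g₂ z).re) {z : ℂ} (hz : z ∈ U) :
    deriv g₁ z = deriv g₂ z := by
  set h : ℂ → ℂ := fun w => g₁ w - g₂ w with hh
  have hd : DifferentiableOn ℂ h U := h₁.sub h₂
  have hre0 : ∀ w ∈ U, (h w).re = 0 := fun w hw => by simp [hh, sub_re, hre w hw]
  have hnorm : ∀ w ∈ U, ‖Complex.exp (h w)‖ = 1 := fun w hw => by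
    rw [Complex.norm_exp, hre0 w hw, Real.exp_zero]
  have hde : DifferentiableOn ℂ (fun w => Complex.exp (h w)) U := hd.cexp
  have hmax : IsMaxOn (norm ∘ fun w => Complex.exp (h w)) U z := by
    intro w hw
    simp only [Function.comp, mem_setOf_eq]
    rw [hnorm w hw, hnorm z hz]
  have hconst := Complex.eqOn_of_isPreconnected_of_isMaxOn_norm hUc hUo hde hz hmax
  -- exp ∘ h is constant on U, hence its derivative vanishes; chain rule gives h' = 0.
  have hdc : HasDerivAt (fun w => Complex.exp (h w)) 0 z := by
    have : (fun w => Complex.exp (h w)) =ᶠ[nhds z] fun _ => Complex.exp (h z) := by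
      filter_upwards [hUo.mem_nhds hz] with w hw using hconst hw
    exact (hasDerivAt_const z (Complex.exp (h z))).congr_of_eventuallyEq this
  have hdh : HasDerivAt h (deriv g₁ z - deriv g₂ z) z := by
    have e1 : HasDerivAt g₁ (deriv g₁ z) z :=
      ((h₁.differentiableAt (hUo.mem_nhds hz)).hasDerivAt)
    have e2 : HasDerivAt g₂ (deriv g₂ z) z :=
      ((h₂.differentiableAt (hUo.mem_nhds hz)).hasDerivAt)
    exact e1.sub e2
  have hchain : HasDerivAt (fun w => Complex.exp (h w))
      (Complex.exp (h z) * (deriv g₁ z - deriv g₂ z)) z := hdh.cexp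
  have := hchain.unique hdc
  have hne : Complex.exp (h z) ≠ 0 := Complex.exp_ne_zero _
  have h0 : deriv g₁ z - deriv g₂ z = 0 := by
    rcases mul_eq_zero.mp this with h' | h'
    · exact absurd h' hne
    · exact h'
  exact sub_eq_zero.mp h0

lemma poly_approx {g : ℂ → ℂ} {s ρ : ℝ} (hs : 0 ≤ s) (hsρ : s < ρ)
    (hg : DifferentiableOn ℂ g (closedBall (0:ℂ) ρ)) {ε : ℝ} (hε : 0 < ε) :
    ∃ p : Polynomial ℂ, ∀ ζ ∈ closedBall (0:ℂ) s, ‖Polynomial.eval ζ p - g ζ‖ ≤ ε := by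
  have hρ0 : 0 < ρ := lt_of_le_of_lt hs hsρ
  set R : NNReal := ρ.toNNReal with hR
  have hRρ : (R : ℝ) = ρ := Real.coe_toNNReal ρ hρ0.le
  have hg' : DifferentiableOn ℂ g (closedBall (0:ℂ) (R : ℝ)) := by rwa [hRρ]
  have hR0 : 0 < R := by simpa [hR, Real.toNNReal_pos] using hρ0
  have H := hg'.hasFPowerSeriesOnBall hR0
  set P := cauchyPowerSeries g 0 (R : ℝ) with hP
  set m : ℝ := (s + ρ) / 2 with hm
  have hsm : s < m := by simp [hm]; linarith
  have hmρ : m < ρ := by simp [hm]; linarith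
  have hm0 : 0 ≤ m := hs.trans hsm.le
  set r' : NNReal := m.toNNReal with hr'
  have hr'm : (r' : ℝ) = m := Real.coe_toNNReal m hm0
  have hr'R : (r' : ENNReal) < (R : ENNReal) := by
    rw [ENNReal.coe_lt_coe]
    have : (r' : ℝ) < (R : ℝ) := by rw [hr'm, hRρ]; exact hmρ
    exact_mod_cast this
  have HU := H.tendstoUniformlyOn hr'R
  rw [Metric.tendstoUniformlyOn_iff] at HU
  obtain ⟨n, hn⟩ := (HU ε hε).exists
  -- build the polynomial from the partial sum
  refine ⟨∑ k ∈ Finset.range n, Polynomial.C (P k (fun _ => (1:ℂ))) * Polynomial.X ^ k,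
    fun ζ hζ => ?_⟩
  have hζm : ζ ∈ Metric.ball (0:ℂ) (r' : ℝ) := by
    rw [mem_ball, hr'm]
    calc dist ζ 0 ≤ s := mem_closedBall.mp hζ
    _ < m := hsm
  have hev : Polynomial.eval ζ (∑ k ∈ Finset.range n,
      Polynomial.C (P k (fun _ => (1:ℂ))) * Polynomial.X ^ k) = P.partialSum n ζ := by
    rw [Polynomial.eval_finset_sum]
    unfold FormalMultilinearSeries.partialSum
    refine Finset.sum_congr rfl fun k _ => ?_
    have hmap := (P k).map_smul_univ (fun _ : Fin k => ζ) (fun _ : Fin k => (1:ℂ))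
    simp only [smul_eq_mul, mul_one, Finset.prod_const, Finset.card_univ,
      Fintype.card_fin] at hmap
    rw [Polynomial.eval_mul, Polynomial.eval_C, Polynomial.eval_pow, Polynomial.eval_X, hmap,
      mul_comm]
  rw [hev]
  have := hn ζ hζm
  rw [dist_comm, dist_eq_norm] at this
  simpa using this.le

lemma abs_of_uIcc {a b s : ℝ} (hs : s ∈ uIcc a b) : |s| ≤ max |a| |b| := by
  rcases Set.mem_uIcc.mp hs with ⟨h1, h2⟩ | ⟨h1, h2⟩
  · exact abs_le_max_abs_abs h1 h2
  · rw [max_comm]; exact abs_le_max_abs_abs h1 h2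

lemma sq_mem_ball {s t : ℝ} (h : s^2 + t^2 < 1) : ((s:ℂ) + (t:ℂ) * I) ∈ ball (0:ℂ) 1 := by
  rw [mem_ball, Complex.dist_eq, sub_zero]
  have h2 : ‖(s:ℂ) + (t:ℂ) * I‖ ^ 2 = s^2 + t^2 := by
    rw [Complex.sq_norm, Complex.normSq_add_mul_I]
  nlinarith [norm_nonneg ((s:ℂ) + (t:ℂ) * I)]

set_option maxHeartbeats 1000000 in
lemma primitive_hasDerivAt {f : ℂ → ℂ}
    (hf : ∀ z ∈ ball (0:ℂ) 1, DifferentiableAt ℂ f z) :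
    ∀ z₀ ∈ ball (0:ℂ) 1, HasDerivAt (fun z : ℂ =>
      (∫ t in (0:ℝ)..z.re, f (t : ℂ)) + I * ∫ t in (0:ℝ)..z.im, f (z.re + t * I))
      (f z₀) z₀ := by
  intro z₀ hz₀
  set F : ℂ → ℂ := fun z : ℂ =>
      (∫ t in (0:ℝ)..z.re, f (t : ℂ)) + I * ∫ t in (0:ℝ)..z.im, f (z.re + t * I) with hF
  have hInt : ∀ (φ : ℝ → ℂ), Continuous φ → ∀ a b : ℝ,
      (∀ t ∈ uIcc a b, φ t ∈ ball (0:ℂ) 1) →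
      IntervalIntegrable (fun t => f (φ t)) volume a b := by
    intro φ hφ a b hmem
    apply ContinuousOn.intervalIntegrable
    intro t ht
    exact ((hf _ (hmem t ht)).continuousAt.comp hφ.continuousAt).continuousWithinAt
  rw [hasDerivAt_iff_isLittleO, Asymptotics.isLittleO_iff]
  intro c hc
  set x₀ := z₀.re with hx₀; set y₀ := z₀.im with hy₀
  have hz₀1 : ‖z₀‖ < 1 := by simpa [Complex.dist_eq] using hz₀
  have hfc : ContinuousAt f z₀ := (hf z₀ hz₀).continuousAt
  rw [Metric.continuousAt_iff] at hfc
  obtain ⟨δ₁, hδ₁pos, hδ₁⟩ := hfc (c/2) (by linarith)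
  set δ : ℝ := min (δ₁/3) ((1 - ‖z₀‖)/3) with hδ
  have hδpos : 0 < δ := lt_min (by linarith) (by linarith)
  have hδa : δ ≤ δ₁/3 := min_le_left _ _
  have hδb : δ ≤ (1 - ‖z₀‖)/3 := min_le_right _ _
  filter_upwards [Metric.ball_mem_nhds z₀ hδpos] with z hzmem
  have hzd : ‖z - z₀‖ < δ := by simpa [Complex.dist_eq] using hzmem
  set x := z.re with hx; set y := z.im with hy
  have hxx₀ : |x - x₀| < δ := by
    calc |x - x₀| = |(z - z₀).re| := by simp [hx, hx₀]
    _ ≤ ‖z - z₀‖ := Complex.abs_re_le_norm _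
    _ < δ := hzd
  have hyy₀ : |y - y₀| < δ := by
    calc |y - y₀| = |(z - z₀).im| := by simp [hy, hy₀]
    _ ≤ ‖z - z₀‖ := Complex.abs_im_le_norm _
    _ < δ := hzd
  have habsz : ‖z‖ < 1 := by
    calc ‖z‖ ≤ ‖z₀‖ + ‖z - z₀‖ := by
          simpa using norm_add_le z₀ (z - z₀)
    _ < ‖z₀‖ + δ := by linarith
    _ < 1 := by linarith
  have hz₀sq : x₀^2 + y₀^2 < 1 := by
    have h1 : ‖z₀‖ ^ 2 = x₀^2 + y₀^2 := by
      rw [Complex.sq_norm, Complex.normSq_apply]; ring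
    nlinarith [norm_nonneg z₀]
  have hzsq : x^2 + y^2 < 1 := by
    have h1 : ‖z‖ ^ 2 = x^2 + y^2 := by
      rw [Complex.sq_norm, Complex.normSq_apply]; ring
    nlinarith [norm_nonneg z]
  have hAδ : ‖z₀‖ + δ < 1 := by linarith
  have hA : |x₀| ≤ ‖z₀‖ := Complex.abs_re_le_norm z₀
  have hz₀eq : ‖z₀‖ ^ 2 = x₀^2 + y₀^2 := by
    rw [Complex.sq_norm, Complex.normSq_apply]; ring
  have hxb' : |x| ≤ |x₀| + δ := by
    calc |x| = |x₀ + (x - x₀)| := by ring_nf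
    _ ≤ |x₀| + |x - x₀| := abs_add_le _ _
    _ ≤ |x₀| + δ := by linarith
  have hcornsq : x^2 + y₀^2 < 1 := by
    nlinarith [mul_self_le_mul_self (abs_nonneg x) hxb', _root_.sq_abs x, _root_.sq_abs x₀,
      hA, hAδ, hδpos.le, norm_nonneg z₀, hz₀eq]
  -- keyA : rectangle [[x₀,x]] × [[0,y₀]] is inside the unit ball
  have keyA : ∀ s t : ℝ, s ∈ uIcc x₀ x → t ∈ uIcc 0 y₀ →
      ((s:ℂ) + (t:ℂ) * I) ∈ ball (0:ℂ) 1 := by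
    intro s t hs ht
    have h1 := abs_of_uIcc hs
    have h2 := abs_of_uIcc ht
    rw [abs_zero] at h2
    have h2' : |t| ≤ |y₀| := le_trans h2 (by simp)
    have ht2 : t^2 ≤ y₀^2 := by
      nlinarith [mul_self_le_mul_self (abs_nonneg t) h2', _root_.sq_abs t, _root_.sq_abs y₀]
    apply sq_mem_ball
    rcases max_cases |x₀| |x| with ⟨hm, _⟩ | ⟨hm, _⟩ <;> rw [hm] at h1
    · have : s^2 ≤ x₀^2 := by
        nlinarith [mul_self_le_mul_self (abs_nonneg s) h1, _root_.sq_abs s, _root_.sq_abs x₀]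
      linarith
    · have : s^2 ≤ x^2 := by
        nlinarith [mul_self_le_mul_self (abs_nonneg s) h1, _root_.sq_abs s, _root_.sq_abs x]
      linarith
  -- keyB : rectangle [[x₀,x]] × [[y₀,y]] is inside the unit ball
  have keyB : ∀ s t : ℝ, s ∈ uIcc x₀ x → t ∈ uIcc y₀ y →
      ((s:ℂ) + (t:ℂ) * I) ∈ ball (0:ℂ) 1 := by
    intro s t hs ht
    have h1 : |s - x₀| ≤ |x - x₀| := by
      rcases Set.mem_uIcc.mp hs with ⟨u1, u2⟩ | ⟨u1, u2⟩
      · rw [_root_.abs_of_nonneg (by linarith)]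
        exact le_trans (by linarith) (le_abs_self (x - x₀))
      · rw [_root_.abs_of_nonpos (by linarith)]
        exact le_trans (by linarith) (neg_le_abs (x - x₀))
    have h2 : |t - y₀| ≤ |y - y₀| := by
      rcases Set.mem_uIcc.mp ht with ⟨u1, u2⟩ | ⟨u1, u2⟩
      · rw [_root_.abs_of_nonneg (by linarith)]
        exact le_trans (by linarith) (le_abs_self (y - y₀))
      · rw [_root_.abs_of_nonpos (by linarith)]
        exact le_trans (by linarith) (neg_le_abs (y - y₀))
    have hdist : ‖((s:ℂ) + (t:ℂ)*I) - z₀‖ ≤ |s - x₀| + |t - y₀| := by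
      have := Complex.norm_le_abs_re_add_abs_im (((s:ℂ) + (t:ℂ)*I) - z₀)
      simpa [hx₀, hy₀] using this
    rw [mem_ball, Complex.dist_eq, sub_zero]
    calc ‖(s:ℂ) + (t:ℂ)*I‖
        ≤ ‖z₀‖ + ‖((s:ℂ) + (t:ℂ)*I) - z₀‖ := by
          simpa using norm_add_le z₀ (((s:ℂ) + (t:ℂ)*I) - z₀)
      _ ≤ ‖z₀‖ + (|s - x₀| + |t - y₀|) := by linarith
      _ ≤ ‖z₀‖ + (δ + δ) := by linarith
      _ < 1 := by linarith
  -- integrability facts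
  have contH : Continuous (fun t : ℝ => (t:ℂ)) := Complex.continuous_ofReal
  have contH2 : ∀ c : ℝ, Continuous (fun t : ℝ => (t:ℂ) + (c:ℂ)*I) :=
    fun c => Complex.continuous_ofReal.add continuous_const
  have contV : ∀ c : ℝ, Continuous (fun t : ℝ => (c:ℂ) + (t:ℂ)*I) :=
    fun c => continuous_const.add (Complex.continuous_ofReal.mul continuous_const)
  have int1 : IntervalIntegrable (fun t : ℝ => f ((t : ℂ))) volume 0 x₀ := by
    refine hInt _ contH _ _ (fun t ht => ?_)
    have h1 := abs_of_uIcc ht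
    rw [abs_zero, max_comm, max_eq_left (abs_nonneg x₀)] at h1
    rw [mem_ball, Complex.dist_eq, sub_zero, Complex.norm_real, Real.norm_eq_abs]
    calc |t| ≤ |x₀| := h1
    _ ≤ ‖z₀‖ := hA
    _ < 1 := hz₀1
  have int2 : IntervalIntegrable (fun t : ℝ => f ((t : ℂ))) volume x₀ x := by
    refine hInt _ contH _ _ (fun t ht => ?_)
    have := keyA t 0 ht (left_mem_uIcc)
    simpa using this
  have int3 : IntervalIntegrable (fun t : ℝ => f ((x:ℂ) + (t:ℂ) * I)) volume 0 y₀ := by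
    refine hInt _ (contV x) _ _ (fun t ht => keyA x t right_mem_uIcc ht)
  have int4 : IntervalIntegrable (fun t : ℝ => f ((x:ℂ) + (t:ℂ) * I)) volume y₀ y := by
    refine hInt _ (contV x) _ _ (fun t ht => keyB x t right_mem_uIcc ht)
  have int5 : IntervalIntegrable (fun t : ℝ => f ((x₀:ℂ) + (t:ℂ) * I)) volume 0 y₀ := by
    refine hInt _ (contV x₀) _ _ (fun t ht => keyA x₀ t left_mem_uIcc ht)
  have int6 : IntervalIntegrable (fun t : ℝ => f ((t:ℂ) + (y₀:ℂ) * I)) volume x₀ x := by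
    refine hInt _ (contH2 y₀) _ _ (fun t ht => keyA t y₀ ht right_mem_uIcc)
  -- Cauchy-Goursat on the rectangle with corners x₀ and x + y₀ I
  have hb_re : ((x:ℂ) + (y₀:ℂ) * I).re = x := by simp
  have hb_im : ((x:ℂ) + (y₀:ℂ) * I).im = y₀ := by simp
  have ha_re : ((x₀:ℂ)).re = x₀ := by simp
  have ha_im : ((x₀:ℂ)).im = 0 := by simp
  have hrect := Complex.integral_boundary_rect_eq_zero_of_differentiableOn f
      ((x₀ : ℂ)) ((x:ℂ) + (y₀:ℂ) * I) (by
    intro ζ hζ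
    rw [Complex.mem_reProdIm, ha_re, ha_im, hb_re, hb_im] at hζ
    refine (hf ζ ?_).differentiableWithinAt
    rw [← Complex.re_add_im ζ]
    exact keyA _ _ hζ.1 hζ.2)
  rw [ha_re, ha_im, hb_re, hb_im] at hrect
  simp only [Complex.ofReal_zero, zero_mul, add_zero, smul_eq_mul] at hrect
  -- additivity of the defining integrals
  have hs1 : (∫ t in (0:ℝ)..x₀, f ((t:ℂ))) + (∫ t in x₀..x, f ((t:ℂ)))
      = ∫ t in (0:ℝ)..x, f ((t:ℂ)) :=
    intervalIntegral.integral_add_adjacent_intervals int1 int2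
  have hs2 : (∫ t in (0:ℝ)..y₀, f ((x:ℂ) + (t:ℂ)*I)) + (∫ t in y₀..y, f ((x:ℂ) + (t:ℂ)*I))
      = ∫ t in (0:ℝ)..y, f ((x:ℂ) + (t:ℂ)*I) :=
    intervalIntegral.integral_add_adjacent_intervals int3 int4
  -- key identity
  have keyeq : F z - F z₀ - (z - z₀) * f z₀ =
      ((∫ t in x₀..x, f ((t:ℂ) + (y₀:ℂ)*I)) - ((x:ℂ) - (x₀:ℂ)) * f z₀)
      + I * ((∫ t in y₀..y, f ((x:ℂ) + (t:ℂ)*I)) - ((y:ℂ) - (y₀:ℂ)) * f z₀) := by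
    have hzsub : z - z₀ = ((x - x₀ : ℝ):ℂ) + ((y - y₀ : ℝ):ℂ) * I := by
      apply Complex.ext <;> simp [hx, hy, hx₀, hy₀]
    have hFz : F z = (∫ t in (0:ℝ)..x, f ((t:ℂ))) + I * ∫ t in (0:ℝ)..y, f ((x:ℂ) + (t:ℂ)*I) := rfl
    have hFz₀ : F z₀ = (∫ t in (0:ℝ)..x₀, f ((t:ℂ)))
        + I * ∫ t in (0:ℝ)..y₀, f ((x₀:ℂ) + (t:ℂ)*I) := rfl
    rw [hFz, hFz₀, ← hs1, ← hs2, hzsub]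
    push_cast
    linear_combination hrect
  -- estimates
  have est1 : ‖(∫ t in x₀..x, f ((t:ℂ) + (y₀:ℂ)*I)) - ((x:ℂ) - (x₀:ℂ)) * f z₀‖
      ≤ (c/2) * |x - x₀| := by
    have hconst : ((x:ℂ) - (x₀:ℂ)) * f z₀ = ∫ t in x₀..x, f z₀ := by
      rw [intervalIntegral.integral_const, Complex.real_smul]
      push_cast; ring
    rw [hconst, ← intervalIntegral.integral_sub int6 intervalIntegrable_const]
    apply intervalIntegral.norm_integral_le_of_norm_le_const
    intro t ht
    have ht' : t ∈ uIcc x₀ x := Set.uIoc_subset_uIcc ht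
    have hdist : dist ((t:ℂ) + (y₀:ℂ)*I) z₀ < δ₁ := by
      have heq : ((t:ℂ) + (y₀:ℂ)*I) - z₀ = ((t - x₀ : ℝ):ℂ) := by
        apply Complex.ext <;> simp [hx₀, hy₀]
      rw [Complex.dist_eq, heq, Complex.norm_real, Real.norm_eq_abs]
      have h1 : |t - x₀| ≤ |x - x₀| := by
        rcases Set.mem_uIcc.mp ht' with ⟨u1, u2⟩ | ⟨u1, u2⟩
        · rw [_root_.abs_of_nonneg (by linarith)]
          exact le_trans (by linarith) (le_abs_self (x - x₀))
        · rw [_root_.abs_of_nonpos (by linarith)]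
          exact le_trans (by linarith) (neg_le_abs (x - x₀))
      calc |t - x₀| ≤ |x - x₀| := h1
      _ < δ := hxx₀
      _ ≤ δ₁/3 := hδa
      _ < δ₁ := by linarith
    have := hδ₁ hdist
    rw [dist_eq_norm] at this
    exact this.le
  have est2 : ‖(∫ t in y₀..y, f ((x:ℂ) + (t:ℂ)*I)) - ((y:ℂ) - (y₀:ℂ)) * f z₀‖
      ≤ (c/2) * |y - y₀| := by
    have hconst : ((y:ℂ) - (y₀:ℂ)) * f z₀ = ∫ t in y₀..y, f z₀ := by
      rw [intervalIntegral.integral_const, Complex.real_smul]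
      push_cast; ring
    rw [hconst, ← intervalIntegral.integral_sub int4 intervalIntegrable_const]
    apply intervalIntegral.norm_integral_le_of_norm_le_const
    intro t ht
    have ht' : t ∈ uIcc y₀ y := Set.uIoc_subset_uIcc ht
    have hdist : dist ((x:ℂ) + (t:ℂ)*I) z₀ < δ₁ := by
      have hd2 : ‖((x:ℂ) + (t:ℂ)*I) - z₀‖ ≤ |x - x₀| + |t - y₀| := by
        have := Complex.norm_le_abs_re_add_abs_im (((x:ℂ) + (t:ℂ)*I) - z₀)
        simpa [hx₀, hy₀] using this
      have h2 : |t - y₀| ≤ |y - y₀| := by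
        rcases Set.mem_uIcc.mp ht' with ⟨u1, u2⟩ | ⟨u1, u2⟩
        · rw [_root_.abs_of_nonneg (by linarith)]
          exact le_trans (by linarith) (le_abs_self (y - y₀))
        · rw [_root_.abs_of_nonpos (by linarith)]
          exact le_trans (by linarith) (neg_le_abs (y - y₀))
      rw [Complex.dist_eq]
      calc ‖((x:ℂ) + (t:ℂ)*I) - z₀‖ ≤ |x - x₀| + |t - y₀| := hd2
      _ ≤ |x - x₀| + |y - y₀| := by linarith
      _ < δ + δ := by linarith
      _ ≤ δ₁/3 + δ₁/3 := by linarith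
      _ < δ₁ := by linarith
    have := hδ₁ hdist
    rw [dist_eq_norm] at this
    exact this.le
  -- combine
  have habs_re : |x - x₀| ≤ ‖z - z₀‖ := by
    have : (z - z₀).re = x - x₀ := by simp [hx, hx₀]
    rw [← this]; exact Complex.abs_re_le_norm _
  have habs_im : |y - y₀| ≤ ‖z - z₀‖ := by
    have : (z - z₀).im = y - y₀ := by simp [hy, hy₀]
    rw [← this]; exact Complex.abs_im_le_norm _
  calc ‖F z - F z₀ - (z - z₀) • f z₀‖
      = ‖((∫ t in x₀..x, f ((t:ℂ) + (y₀:ℂ)*I)) - ((x:ℂ) - (x₀:ℂ)) * f z₀)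
        + I * ((∫ t in y₀..y, f ((x:ℂ) + (t:ℂ)*I)) - ((y:ℂ) - (y₀:ℂ)) * f z₀)‖ := by
        rw [smul_eq_mul, keyeq]
  _ ≤ ‖(∫ t in x₀..x, f ((t:ℂ) + (y₀:ℂ)*I)) - ((x:ℂ) - (x₀:ℂ)) * f z₀‖
        + ‖I * ((∫ t in y₀..y, f ((x:ℂ) + (t:ℂ)*I)) - ((y:ℂ) - (y₀:ℂ)) * f z₀)‖ :=
        norm_add_le _ _
  _ = ‖(∫ t in x₀..x, f ((t:ℂ) + (y₀:ℂ)*I)) - ((x:ℂ) - (x₀:ℂ)) * f z₀‖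
        + ‖(∫ t in y₀..y, f ((x:ℂ) + (t:ℂ)*I)) - ((y:ℂ) - (y₀:ℂ)) * f z₀‖ := by
        rw [norm_mul, Complex.norm_I, one_mul]
  _ ≤ (c/2) * |x - x₀| + (c/2) * |y - y₀| := add_le_add est1 est2
  _ ≤ (c/2) * ‖z - z₀‖ + (c/2) * ‖z - z₀‖ := by
        have := hc.le
        gcongr
  _ = c * ‖z - z₀‖ := by ring



lemma exists_global_conjugate {utilde : ℂ → ℝ}
    (hh : ∀ z ∈ ball (0:ℂ) 1, ∃ r > 0, ball z r ⊆ ball (0:ℂ) 1 ∧ ∃ g : ℂ → ℂ,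
      DifferentiableOn ℂ g (ball z r) ∧ ∀ w ∈ ball z r, utilde w = (g w).re) :
    ∃ G : ℂ → ℂ, (∀ z ∈ ball (0:ℂ) 1, DifferentiableAt ℂ G z) ∧
      ∀ z ∈ ball (0:ℂ) 1, (G z).re = utilde z := by
  choose! r hrpos hrsub g hgdiff hgre using hh
  set f : ℂ → ℂ := fun ζ => deriv (g ζ) ζ with hfdef
  -- local identification of f with deriv (g z)
  have hloc : ∀ z ∈ ball (0:ℂ) 1, ∀ ζ ∈ ball z (r z), f ζ = deriv (g z) ζ := by
    intro z hz ζ hζ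
    have hζ1 : ζ ∈ ball (0:ℂ) 1 := hrsub z hz hζ
    have hζ2 : ζ ∈ ball ζ (r ζ) := mem_ball_self (hrpos ζ hζ1)
    set V : Set ℂ := ball z (r z) ∩ ball ζ (r ζ) with hV
    have hVo : IsOpen V := isOpen_ball.inter isOpen_ball
    have hVc : IsPreconnected V := ((convex_ball z (r z)).inter (convex_ball ζ (r ζ))).isPreconnected
    have hζV : ζ ∈ V := ⟨hζ, hζ2⟩
    exact deriv_eq_of_re_eq hVo hVc
      ((hgdiff ζ hζ1).mono inter_subset_right)
      ((hgdiff z hz).mono inter_subset_left)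
      (fun w hw => by rw [← hgre ζ hζ1 w hw.2, ← hgre z hz w hw.1]) hζV
  -- f is holomorphic on the ball
  have hf : ∀ ζ ∈ ball (0:ℂ) 1, DifferentiableAt ℂ f ζ := by
    intro ζ hζ
    have hrp := hrpos ζ hζ
    have hd : DifferentiableOn ℂ (deriv (g ζ)) (ball ζ (r ζ)) := by
      have := ((hgdiff ζ hζ).analyticOnNhd isOpen_ball).deriv
      exact this.differentiableOn
    have heq : f =ᶠ[nhds ζ] deriv (g ζ) := by
      filter_upwards [ball_mem_nhds ζ hrp] with w hw using hloc ζ hζ w hw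
    exact (Filter.EventuallyEq.differentiableAt_iff heq).mpr
      ((hd.differentiableAt (isOpen_ball.mem_nhds (mem_ball_self hrp))))
  set F : ℂ → ℂ := fun z : ℂ =>
      (∫ t in (0:ℝ)..z.re, f (t : ℂ)) + I * ∫ t in (0:ℝ)..z.im, f (z.re + t * I) with hFdef
  have hF : ∀ z ∈ ball (0:ℂ) 1, HasDerivAt F (f z) z := primitive_hasDerivAt hf
  set v : ℂ → ℝ := fun ζ => (F ζ).re - utilde ζ with hvdef
  -- v is locally constant
  have hvloc : ∀ z ∈ ball (0:ℂ) 1, ∀ ζ ∈ ball z (r z), v ζ = v z := by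
    intro z hz ζ hζ
    set d : ℂ → ℂ := fun w => F w - g z w with hd
    have hder : ∀ w ∈ ball z (r z), HasDerivAt d 0 w := by
      intro w hw
      have h1 : HasDerivAt F (f w) w := hF w (hrsub z hz hw)
      have h2 : HasDerivAt (g z) (deriv (g z) w) w :=
        ((hgdiff z hz).differentiableAt (isOpen_ball.mem_nhds hw)).hasDerivAt
      have h3 : f w = deriv (g z) w := hloc z hz w hw
      have := h1.sub h2
      rw [h3, sub_self] at this
      exact this
    have hdiff : DifferentiableOn ℂ d (ball z (r z)) :=
      fun w hw => ((hder w hw).differentiableAt).differentiableWithinAt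
    have hconst : d ζ = d z := by
      apply Convex.is_const_of_fderivWithin_eq_zero (convex_ball z (r z)) hdiff _ hζ
        (mem_ball_self (hrpos z hz))
      intro w hw
      rw [fderivWithin_of_isOpen isOpen_ball hw]
      have := ((hder w hw).hasFDerivAt).fderiv
      rw [this]
      ext
      simp
    have := congrArg Complex.re hconst
    simp only [hd, Complex.sub_re] at this
    rw [← hgre z hz ζ hζ, ← hgre z hz z (mem_ball_self (hrpos z hz))] at this
    simpa [hvdef] using this
  -- v is globally constant on the ball
  have hglob : ∀ ζ ∈ ball (0:ℂ) 1, v ζ = v 0 := by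
    have h0 : (0:ℂ) ∈ ball (0:ℂ) 1 := mem_ball_self one_pos
    set S : Set ℂ := {ζ | ζ ∈ ball (0:ℂ) 1 ∧ v ζ = v 0} with hS
    set T : Set ℂ := {ζ | ζ ∈ ball (0:ℂ) 1 ∧ v ζ ≠ v 0} with hT
    have hSo : IsOpen S := by
      rw [isOpen_iff_mem_nhds]
      intro ζ hζ
      refine Filter.mem_of_superset (ball_mem_nhds ζ (hrpos ζ hζ.1)) fun w hw => ?_
      exact ⟨hrsub ζ hζ.1 hw, by rw [hvloc ζ hζ.1 w hw, hζ.2]⟩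
    have hTo : IsOpen T := by
      rw [isOpen_iff_mem_nhds]
      intro ζ hζ
      refine Filter.mem_of_superset (ball_mem_nhds ζ (hrpos ζ hζ.1)) fun w hw => ?_
      exact ⟨hrsub ζ hζ.1 hw, by rw [hvloc ζ hζ.1 w hw]; exact hζ.2⟩
    have hdisj : Disjoint S T := by
      rw [Set.disjoint_left]
      rintro ζ ⟨_, h1⟩ ⟨_, h2⟩
      exact h2 h1
    have hsub2 : ball (0:ℂ) 1 ⊆ S ∪ T := by
      intro ζ hζ
      by_cases hv : v ζ = v 0
      · exact Or.inl ⟨hζ, hv⟩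
      · exact Or.inr ⟨hζ, hv⟩
    have hne : (ball (0:ℂ) 1 ∩ S).Nonempty := ⟨0, h0, h0, rfl⟩
    have := (convex_ball (0:ℂ) 1).isPreconnected.subset_left_of_subset_union hSo hTo hdisj hsub2 hne
    intro ζ hζ
    exact (this hζ).2
  refine ⟨fun ζ => F ζ - ((v 0 : ℝ) : ℂ), fun z hz => ?_, fun z hz => ?_⟩
  · exact ((hF z hz).differentiableAt).sub (differentiableAt_const _)
  · have := hglob z hz
    simp only [hvdef] at this
    simp only [Complex.sub_re, Complex.ofReal_re]
    have h0 : v 0 = (F 0).re - utilde 0 := rfl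
    linarith


lemma eval_aeval (q : Fin 2 → ℂ) (i : Fin 2) (p : Polynomial ℂ) :
    MvPolynomial.eval q (Polynomial.aeval (MvPolynomial.X i) p) = Polynomial.eval (q i) p := by
  have h := Polynomial.aeval_algHom_apply (MvPolynomial.aeval q) (MvPolynomial.X i) p
  rw [MvPolynomial.aeval_X] at h
  have h2 : (MvPolynomial.aeval q) ((Polynomial.aeval (MvPolynomial.X i)) p)
      = (MvPolynomial.eval q) ((Polynomial.aeval (MvPolynomial.X i)) p) := rfl
  have h3 : (Polynomial.aeval (q i)) p = Polynomial.eval (q i) p := rfl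
  rw [← h2, ← h, h3]

-- bound transfer from K to its polynomial hull, for functions approximable by polynomials on D
lemma hull_bound {K D : Set (Fin 2 → ℂ)} (hKD : K ⊆ D) {p : Fin 2 → ℂ}
    (hp : p ∈ polyHull K) (hpD : p ∈ D) (f : (Fin 2 → ℂ) → ℂ) {S : ℝ} (hS : 0 ≤ S)
    (hfK : ∀ q ∈ K, ‖f q‖ ≤ S)
    (happrox : ∀ ε > 0, ∃ P : MvPolynomial (Fin 2) ℂ,
      ∀ q ∈ D, ‖MvPolynomial.eval q P - f q‖ ≤ ε) :
    ‖f p‖ ≤ S := by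
  refine le_of_forall_pos_le_add fun ε hε => ?_
  obtain ⟨P, hP⟩ := happrox (ε/2) (by linarith)
  have h1 : ‖f p‖ ≤ ‖MvPolynomial.eval p P‖ + ε/2 := by
    have := hP p hpD
    have h2 := norm_sub_norm_le (MvPolynomial.eval p P - f p + f p) (f p)
    simp only [sub_add_cancel] at h2
    have := norm_add_le (MvPolynomial.eval p P - f p) (f p)
    calc ‖f p‖ = ‖MvPolynomial.eval p P - (MvPolynomial.eval p P - f p)‖ := by ring_nf
    _ ≤ ‖MvPolynomial.eval p P‖ + ‖MvPolynomial.eval p P - f p‖ := norm_sub_le _ _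
    _ ≤ ‖MvPolynomial.eval p P‖ + ε/2 := by linarith [hP p hpD]
  have h3 : (⨆ w ∈ K, ‖MvPolynomial.eval w P‖) ≤ S + ε/2 := by
    refine Real.iSup_le (fun w => Real.iSup_le (fun hw => ?_) (by linarith)) (by linarith)
    calc ‖MvPolynomial.eval w P‖
        = ‖f w + (MvPolynomial.eval w P - f w)‖ := by ring_nf
    _ ≤ ‖f w‖ + ‖MvPolynomial.eval w P - f w‖ := norm_add_le _ _
    _ ≤ S + ε/2 := add_le_add (hfK w hw) (hP w (hKD hw))
  calc ‖f p‖ ≤ ‖MvPolynomial.eval p P‖ + ε/2 := h1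
  _ ≤ (⨆ w ∈ K, ‖MvPolynomial.eval w P‖) + ε/2 := by linarith [hp P]
  _ ≤ S + ε := by linarith

-- membership bound via a single polynomial with nonneg pointwise bound on K
lemma hull_coord_bound {K : Set (Fin 2 → ℂ)} {p : Fin 2 → ℂ} (hp : p ∈ polyHull K)
    (P : MvPolynomial (Fin 2) ℂ) {S : ℝ} (hS : 0 ≤ S)
    (hfK : ∀ q ∈ K, ‖MvPolynomial.eval q P‖ ≤ S) :
    ‖MvPolynomial.eval p P‖ ≤ S := by
  refine le_trans (hp P) (Real.iSup_le (fun w => Real.iSup_le (fun hw => hfK w hw) hS) hS)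

-- product approximation: from 1-variable polynomial approximations of g₁ on |ζ| ≤ s₁ and
-- g₂ on |ζ| ≤ s₂, get a 2-variable polynomial approximation of g₁(q 0) * g₂(q 1).
lemma prod_approx {g₁ g₂ : ℂ → ℂ} {s₁ s₂ : ℝ} (hs₁ : 0 ≤ s₁) (hs₂ : 0 ≤ s₂)
    (h₁ : ∀ ε > 0, ∃ p : Polynomial ℂ, ∀ ζ ∈ closedBall (0:ℂ) s₁,
      ‖Polynomial.eval ζ p - g₁ ζ‖ ≤ ε)
    (h₂ : ∀ ε > 0, ∃ p : Polynomial ℂ, ∀ ζ ∈ closedBall (0:ℂ) s₂,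
      ‖Polynomial.eval ζ p - g₂ ζ‖ ≤ ε) :
    ∀ ε > 0, ∃ P : MvPolynomial (Fin 2) ℂ, ∀ q : Fin 2 → ℂ,
      ‖q 0‖ ≤ s₁ → ‖q 1‖ ≤ s₂ → ‖MvPolynomial.eval q P - g₁ (q 0) * g₂ (q 1)‖ ≤ ε := by
  -- bounds for g₁, g₂
  obtain ⟨p₁0, hp₁0⟩ := h₁ 1 one_pos
  obtain ⟨p₂0, hp₂0⟩ := h₂ 1 one_pos
  obtain ⟨M₁, hM₁⟩ := (isCompact_closedBall (0:ℂ) s₁).exists_bound_of_continuousOn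
    (Polynomial.continuous p₁0).continuousOn
  obtain ⟨M₂, hM₂⟩ := (isCompact_closedBall (0:ℂ) s₂).exists_bound_of_continuousOn
    (Polynomial.continuous p₂0).continuousOn
  have hg₁ : ∀ ζ ∈ closedBall (0:ℂ) s₁, ‖g₁ ζ‖ ≤ M₁ + 1 := by
    intro ζ hζ
    calc ‖g₁ ζ‖ = ‖Polynomial.eval ζ p₁0 - (Polynomial.eval ζ p₁0 - g₁ ζ)‖ := by ring_nf
    _ ≤ ‖Polynomial.eval ζ p₁0‖ + ‖Polynomial.eval ζ p₁0 - g₁ ζ‖ := norm_sub_le _ _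
    _ ≤ M₁ + 1 := add_le_add (hM₁ ζ hζ) (hp₁0 ζ hζ)
  have hg₂ : ∀ ζ ∈ closedBall (0:ℂ) s₂, ‖g₂ ζ‖ ≤ M₂ + 1 := by
    intro ζ hζ
    calc ‖g₂ ζ‖ = ‖Polynomial.eval ζ p₂0 - (Polynomial.eval ζ p₂0 - g₂ ζ)‖ := by ring_nf
    _ ≤ ‖Polynomial.eval ζ p₂0‖ + ‖Polynomial.eval ζ p₂0 - g₂ ζ‖ := norm_sub_le _ _
    _ ≤ M₂ + 1 := add_le_add (hM₂ ζ hζ) (hp₂0 ζ hζ)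
  have hM₁0 : 0 ≤ M₁ + 1 := le_trans (norm_nonneg _) (hg₁ 0 (mem_closedBall_self hs₁))
  have hM₂0 : 0 ≤ M₂ + 1 := le_trans (norm_nonneg _) (hg₂ 0 (mem_closedBall_self hs₂))
  intro ε hε
  set δ : ℝ := min 1 (ε / (M₂ + 1 + (M₁ + 1) + 1)) with hδ
  have hδpos : 0 < δ := lt_min one_pos (div_pos hε (by linarith))
  obtain ⟨p₁, hp₁⟩ := h₁ δ hδpos
  obtain ⟨p₂, hp₂⟩ := h₂ δ hδpos
  refine ⟨(Polynomial.aeval (MvPolynomial.X 0) p₁) * (Polynomial.aeval (MvPolynomial.X 1) p₂),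
    fun q hq0 hq1 => ?_⟩
  have hq0' : q 0 ∈ closedBall (0:ℂ) s₁ := by simpa [mem_closedBall, Complex.dist_eq] using hq0
  have hq1' : q 1 ∈ closedBall (0:ℂ) s₂ := by simpa [mem_closedBall, Complex.dist_eq] using hq1
  rw [map_mul, eval_aeval, eval_aeval]
  set a := Polynomial.eval (q 0) p₁
  set b := Polynomial.eval (q 1) p₂
  have key : a * b - g₁ (q 0) * g₂ (q 1)
      = (a - g₁ (q 0)) * b + g₁ (q 0) * (b - g₂ (q 1)) := by ring
  have hbb : ‖b‖ ≤ M₂ + 1 + 1 := by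
    calc ‖b‖ = ‖g₂ (q 1) + (b - g₂ (q 1))‖ := by ring_nf
    _ ≤ ‖g₂ (q 1)‖ + ‖b - g₂ (q 1)‖ := norm_add_le _ _
    _ ≤ (M₂ + 1) + 1 := add_le_add (hg₂ _ hq1')
        (le_trans (hp₂ _ hq1') (min_le_left _ _))
  have hδ2 : δ ≤ ε / (M₂ + 1 + (M₁ + 1) + 1) := min_le_right _ _
  calc ‖a * b - g₁ (q 0) * g₂ (q 1)‖
      = ‖(a - g₁ (q 0)) * b + g₁ (q 0) * (b - g₂ (q 1))‖ := by rw [key]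
  _ ≤ ‖(a - g₁ (q 0)) * b‖ + ‖g₁ (q 0) * (b - g₂ (q 1))‖ := norm_add_le _ _
  _ = ‖a - g₁ (q 0)‖ * ‖b‖ + ‖g₁ (q 0)‖ * ‖b - g₂ (q 1)‖ := by rw [norm_mul, norm_mul]
  _ ≤ δ * (M₂ + 1 + 1) + (M₁ + 1) * δ := by
      apply add_le_add
      · exact mul_le_mul (hp₁ _ hq0') hbb (norm_nonneg _) hδpos.le
      · exact mul_le_mul (hg₁ _ hq0') (hp₂ _ hq1') (norm_nonneg _) hM₁0
  _ = δ * (M₂ + 1 + (M₁ + 1) + 1) := by ring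
  _ ≤ (ε / (M₂ + 1 + (M₁ + 1) + 1)) * (M₂ + 1 + (M₁ + 1) + 1) := by
      apply mul_le_mul_of_nonneg_right hδ2 (by linarith)
  _ = ε := by field_simp

end AuxLemmas

/-- Lemma 5: with ũ the Dirichlet solution on the unit disc with boundary values u, the
set K = {(z,w) ∈ Δ̄ × ℂ : ũ(z) ≤ Re w ≤ 3C, |Im w| ≤ C} is polynomially convex. -/
theorem stmt11 (u utilde : ℂ → ℝ)
    (hu : ContinuousOn u (closedBall (0 : ℂ) 1))
    (hh : HarmonicOnSet utilde (ball (0 : ℂ) 1))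
    (hc : ContinuousOn utilde (closedBall (0 : ℂ) 1))
    (hb : ∀ z ∈ sphere (0 : ℂ) 1, utilde z = u z)
    (C : ℝ) (hC : ∀ z ∈ closedBall (0 : ℂ) 1, |u z| ≤ C)
    (K : Set (Fin 2 → ℂ))
    (hK : K = {q : Fin 2 → ℂ | q 0 ∈ closedBall (0 : ℂ) 1 ∧
      utilde (q 0) ≤ (q 1).re ∧ (q 1).re ≤ 3 * C ∧ |(q 1).im| ≤ C}) :
    polyHull K = K := by
  subst hK
  set K : Set (Fin 2 → ℂ) := {q : Fin 2 → ℂ | q 0 ∈ closedBall (0 : ℂ) 1 ∧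
      utilde (q 0) ≤ (q 1).re ∧ (q 1).re ≤ 3 * C ∧ |(q 1).im| ≤ C} with hKdef
  have hC0 : 0 ≤ C := le_trans (abs_nonneg _) (hC 0 (mem_closedBall_self one_pos.le))
  obtain ⟨B, hB⟩ := (isCompact_closedBall (0:ℂ) 1).exists_bound_of_continuousOn hc
  have hB0 : 0 ≤ B := le_trans (norm_nonneg _) (hB 0 (mem_closedBall_self one_pos.le))
  set R : ℝ := B + 4 * C with hRdef
  have hR0 : 0 ≤ R := by positivity
  set R₁ : ℝ := max 1 R with hR₁def
  have hR₁0 : (0:ℝ) ≤ R₁ := le_trans zero_le_one (le_max_left _ _)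
  have hRR₁ : R ≤ R₁ := le_max_right _ _
  have h1R₁ : (1:ℝ) ≤ R₁ := le_max_left _ _
  -- bounds for points of K
  have hK0 : ∀ q ∈ K, ‖q 0‖ ≤ 1 := fun q hq => mem_closedBall_zero_iff.mp hq.1
  have hK1 : ∀ q ∈ K, ‖q 1‖ ≤ R := by
    intro q hq
    obtain ⟨hq0, hq1, hq2, hq3⟩ := hq
    have hre : |(q 1).re| ≤ B + 3 * C := by
      rw [abs_le]
      constructor
      · have := hB (q 0) hq0
        rw [Real.norm_eq_abs, abs_le] at this
        linarith
      · linarith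
    calc ‖q 1‖ ≤ |(q 1).re| + |(q 1).im| := Complex.norm_le_abs_re_add_abs_im _
    _ ≤ (B + 3 * C) + C := add_le_add hre hq3
    _ = R := by rw [hRdef]; ring
  set D : Set (Fin 2 → ℂ) := {q : Fin 2 → ℂ | ‖q 0‖ ≤ 1 ∧ ‖q 1‖ ≤ R₁} with hDdef
  have hKD : K ⊆ D := fun q hq => ⟨hK0 q hq, le_trans (hK1 q hq) hRR₁⟩
  apply Set.Subset.antisymm
  · -- polyHull K ⊆ K
    intro p hp
    -- coordinate bounds
    have hp0 : ‖p 0‖ ≤ 1 := by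
      have := hull_coord_bound hp (MvPolynomial.X 0) zero_le_one
        (fun q hq => by rw [MvPolynomial.eval_X]; exact hK0 q hq)
      rwa [MvPolynomial.eval_X] at this
    have hp1 : ‖p 1‖ ≤ R := by
      have := hull_coord_bound hp (MvPolynomial.X 1) hR0
        (fun q hq => by rw [MvPolynomial.eval_X]; exact hK1 q hq)
      rwa [MvPolynomial.eval_X] at this
    have hpD : p ∈ D := ⟨hp0, le_trans hp1 hRR₁⟩
    -- trivial factor approximation
    have htriv : ∀ ε > 0, ∃ q : Polynomial ℂ, ∀ ζ ∈ closedBall (0:ℂ) 1,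
        ‖Polynomial.eval ζ q - (fun _ : ℂ => (1:ℂ)) ζ‖ ≤ ε := by
      intro ε hε
      exact ⟨Polynomial.C 1, fun ζ _ => by simp [hε.le]⟩
    -- entire factor approximations on |ζ| ≤ R₁
    have hent : ∀ φ : ℂ → ℂ, Differentiable ℂ φ → ∀ ε > 0, ∃ q : Polynomial ℂ,
        ∀ ζ ∈ closedBall (0:ℂ) R₁, ‖Polynomial.eval ζ q - φ ζ‖ ≤ ε := by
      intro φ hφ ε hε
      exact poly_approx hR₁0 (lt_add_one R₁) (hφ.differentiableOn) hε
    -- generic exponential-of-affine bound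
    have hexp_bound : ∀ (a : ℂ) (S : ℝ), (∀ q ∈ K, (a * q 1).re ≤ S) →
        (a * p 1).re ≤ S := by
      intro a S hSK
      have hS' : ∀ q ∈ K, ‖(fun q : Fin 2 → ℂ => (1:ℂ) * Complex.exp (a * q 1)) q‖
          ≤ Real.exp S := by
        intro q hq
        simp only [one_mul, Complex.norm_exp]
        exact Real.exp_le_exp.mpr (hSK q hq)
      have happ := prod_approx zero_le_one hR₁0 htriv
        (hent (fun ζ => Complex.exp (a * ζ))
          ((differentiable_const a).mul differentiable_id |>.cexp))
      have := hull_bound hKD hp hpD (fun q => (1:ℂ) * Complex.exp (a * q 1))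
        (Real.exp_nonneg S) hS'
        (fun ε hε => by
          obtain ⟨P, hP⟩ := happ ε hε
          exact ⟨P, fun q hq => hP q hq.1 hq.2⟩)
      simp only [one_mul, Complex.norm_exp, Real.exp_le_exp] at this
      exact this
    -- Re (p 1) ≤ 3C
    have hre3C : (p 1).re ≤ 3 * C := by
      have := hexp_bound 1 (3 * C) (fun q hq => by simpa using hq.2.2.1)
      simpa using this
    -- |Im (p 1)| ≤ C
    have him : |(p 1).im| ≤ C := by
      have h1 := hexp_bound Complex.I C (fun q hq => by
        have := hq.2.2.2
        rw [abs_le] at this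
        simp [Complex.mul_re]
        linarith [this.1])
      have h2 := hexp_bound (-Complex.I) C (fun q hq => by
        have := hq.2.2.2
        rw [abs_le] at this
        simp [Complex.mul_re]
        linarith [this.2])
      rw [abs_le]
      constructor
      · simp [Complex.mul_re] at h1
        linarith
      · simp [Complex.mul_re] at h2
        linarith
    -- membership of p 0
    have hp0' : p 0 ∈ closedBall (0:ℂ) 1 := mem_closedBall_zero_iff.mpr hp0
    -- the harmonic inequality
    have hharm : utilde (p 0) ≤ (p 1).re := by
      obtain ⟨G, hGdiff, hGre⟩ := exists_global_conjugate hh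
      have hUC := (isCompact_closedBall (0:ℂ) 1).uniformContinuousOn_of_continuous hc
      rw [Metric.uniformContinuousOn_iff] at hUC
      refine le_of_forall_pos_le_add fun ε hε => ?_
      obtain ⟨δ, hδpos, hδ⟩ := hUC (ε/2) (by linarith)
      set r : ℝ := 1 - min (δ/2) (1/2) with hrdef
      have hr0 : 0 < r := by
        have : min (δ/2) (1/2) ≤ 1/2 := min_le_right _ _
        simp only [hrdef]; linarith
      have hr1 : r < 1 := by
        have : 0 < min (δ/2) (1/2) := lt_min (by linarith) (by norm_num)
        simp only [hrdef]; linarith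
      have h1r : 1 - r < δ := by
        have : min (δ/2) (1/2) ≤ δ/2 := min_le_left _ _
        simp only [hrdef]; linarith
      have h1r0 : 0 ≤ 1 - r := by linarith
      -- the scaled point r • ζ stays in the open ball for ‖ζ‖ ≤ 1
      have hscale : ∀ ζ : ℂ, ‖ζ‖ ≤ 1 → ((r:ℂ) * ζ) ∈ ball (0:ℂ) 1 := by
        intro ζ hζ
        rw [mem_ball_zero_iff, norm_mul, Complex.norm_real, Real.norm_eq_abs,
          abs_of_pos hr0]
        nlinarith [norm_nonneg ζ]
      -- distance between ζ and r ζ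
      have hdist : ∀ ζ : ℂ, ‖ζ‖ ≤ 1 → dist ((r:ℂ) * ζ) ζ < δ := by
        intro ζ hζ
        rw [dist_eq_norm]
        have : (r:ℂ) * ζ - ζ = ((r - 1 : ℝ) : ℂ) * ζ := by push_cast; ring
        rw [this, norm_mul, Complex.norm_real, Real.norm_eq_abs, abs_of_nonpos (by linarith)]
        have : ‖ζ‖ ≤ 1 := hζ
        nlinarith
      -- uniform closeness of utilde (r ζ) and utilde ζ
      have hclose : ∀ ζ : ℂ, ‖ζ‖ ≤ 1 → |utilde ((r:ℂ) * ζ) - utilde ζ| < ε/2 := by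
        intro ζ hζ
        have h1 : ((r:ℂ) * ζ) ∈ closedBall (0:ℂ) 1 := ball_subset_closedBall (hscale ζ hζ)
        have h2 : ζ ∈ closedBall (0:ℂ) 1 := mem_closedBall_zero_iff.mpr hζ
        have := hδ _ h1 _ h2 (hdist ζ hζ)
        rwa [Real.dist_eq] at this
      -- holomorphic factor
      set ρ : ℝ := (1 + 1/r)/2 with hρdef
      have hρ1 : 1 < ρ := by
        rw [hρdef]
        have : 1 < 1/r := by
          rw [lt_div_iff₀ hr0]; linarith
        linarith
      have hρr : r * ρ < 1 := by
        have heq : r * ρ = (r + 1)/2 := by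
          rw [hρdef]; field_simp
        rw [heq, div_lt_one (by norm_num : (0:ℝ) < 2)]; linarith
      have hfac : DifferentiableOn ℂ (fun ζ => Complex.exp (G ((r:ℂ) * ζ)))
          (closedBall (0:ℂ) ρ) := by
        intro ζ hζ
        have hmem : ((r:ℂ) * ζ) ∈ ball (0:ℂ) 1 := by
          rw [mem_ball_zero_iff, norm_mul, Complex.norm_real, Real.norm_eq_abs,
            abs_of_pos hr0]
          have : ‖ζ‖ ≤ ρ := mem_closedBall_zero_iff.mp hζ
          nlinarith [norm_nonneg ζ]
        have hinner : DifferentiableAt ℂ (fun ζ : ℂ => (r:ℂ) * ζ) ζ :=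
          (differentiable_id.const_mul _).differentiableAt
        exact (((hGdiff _ hmem).comp ζ hinner).cexp).differentiableWithinAt
      have happ1 : ∀ ε' > 0, ∃ q : Polynomial ℂ, ∀ ζ ∈ closedBall (0:ℂ) 1,
          ‖Polynomial.eval ζ q - Complex.exp (G ((r:ℂ) * ζ))‖ ≤ ε' :=
        fun ε' hε' => poly_approx zero_le_one hρ1 hfac hε'
      have happ2 : ∀ ε' > 0, ∃ q : Polynomial ℂ, ∀ ζ ∈ closedBall (0:ℂ) R₁,
          ‖Polynomial.eval ζ q - Complex.exp (-ζ)‖ ≤ ε' := by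
        intro ε' hε'
        exact poly_approx hR₁0 (lt_add_one R₁) (differentiable_neg.cexp).differentiableOn hε'
      set f : (Fin 2 → ℂ) → ℂ :=
        fun q => Complex.exp (G ((r:ℂ) * q 0)) * Complex.exp (-(q 1)) with hfdef
      have hfnorm : ∀ q : Fin 2 → ℂ, ‖q 0‖ ≤ 1 →
          ‖f q‖ = Real.exp (utilde ((r:ℂ) * q 0) - (q 1).re) := by
        intro q hq0
        have hmem := hscale (q 0) hq0
        rw [hfdef]
        simp only [← Complex.exp_add, Complex.norm_exp]
        rw [Complex.add_re, Complex.neg_re, hGre _ hmem]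
        ring_nf
      have hfK : ∀ q ∈ K, ‖f q‖ ≤ Real.exp (ε/2) := by
        intro q hq
        rw [hfnorm q (hK0 q hq)]
        apply Real.exp_le_exp.mpr
        have h1 := hclose (q 0) (hK0 q hq)
        have h2 := hq.2.1
        rw [abs_lt] at h1
        linarith [h1.2]
      have hfp := hull_bound hKD hp hpD f (Real.exp_nonneg _) hfK
        (fun ε' hε' => by
          obtain ⟨P, hP⟩ := prod_approx zero_le_one hR₁0 happ1 happ2 ε' hε'
          exact ⟨P, fun q hq => hP q hq.1 hq.2⟩)
      rw [hfnorm p hp0, Real.exp_le_exp] at hfp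
      have h3 := hclose (p 0) hp0
      rw [abs_lt] at h3
      linarith [h3.1]
    exact ⟨hp0', hharm, hre3C, him⟩
  · -- K ⊆ polyHull K
    intro q hq P
    obtain ⟨M, hM⟩ := (isCompact_closedBall (0 : Fin 2 → ℂ) R₁).exists_bound_of_continuousOn
      (MvPolynomial.continuous_eval (p := P)).continuousOn
    have hKball : K ⊆ closedBall (0 : Fin 2 → ℂ) R₁ := by
      intro w hw
      rw [mem_closedBall_zero_iff]
      rw [pi_norm_le_iff_of_nonneg hR₁0]
      intro i
      fin_cases i
      · exact le_trans (hK0 w hw) h1R₁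
      · exact le_trans (hK1 w hw) hRR₁
    have hbdd : BddAbove (range fun w => ⨆ _ : w ∈ K, ‖MvPolynomial.eval w P‖) := by
      refine ⟨max M 0, ?_⟩
      rintro y ⟨w, rfl⟩
      show (⨆ _ : w ∈ K, ‖MvPolynomial.eval w P‖) ≤ max M 0
      by_cases hw : w ∈ K
      · rw [ciSup_pos hw]
        exact le_trans (hM w (hKball hw)) (le_max_left _ _)
      · haveI : IsEmpty (w ∈ K) := ⟨hw⟩
        rw [Real.iSup_of_isEmpty]
        exact le_max_right _ _
    have h1 : ‖MvPolynomial.eval q P‖ = ⨆ _ : q ∈ K, ‖MvPolynomial.eval q P‖ :=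
      (ciSup_pos (f := fun _ => ‖MvPolynomial.eval q P‖) hq).symm
    rw [h1]
    exact le_ciSup hbdd q
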